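/- Goodstein's theorem for base-2 starting values that are powers of 2: more generally, every Goodstein sequence terminates, i.e. for every starting value m the Goodstein sequence eventually reaches 0. -/

import Mathlib

open Ordinal


/-- Rewrite `n` in hereditary base-`b` notation and replace every occurrence of
the base `b` by `c`. -/
def hereditaryShift (b c : ℕ) : ℕ → ℕ
  | 0 => 0
  | (n + 1) =>
      c ^ (hereditaryShift b c (Nat.log b (n + 1))) * ((n + 1) / b ^ Nat.log b (n + 1)) +
        hereditaryShift b c ((n + 1) % b ^ Nat.log b (n + 1))
  termination_by n => n
  decreasing_by
  · exact Nat.log_lt_self b (Nat.succ_ne_zero n)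
  · calc (n + 1) % b ^ Nat.log b (n + 1) < b ^ Nat.log b (n + 1) :=
        Nat.mod_lt _ (Nat.pos_of_ne_zero (by
          intro h
          have hb : b = 0 := by
            rcases Nat.pow_eq_zero.mp h with ⟨hb, -⟩
            exact hb
          simp [hb, Nat.log_zero_left] at h))
      _ ≤ n + 1 := Nat.pow_log_le_self b (Nat.succ_ne_zero n)

/-- The Goodstein sequence starting at `m`: at step `n` the current value is
rewritten from hereditary base-`(n+2)` to hereditary base-`(n+3)` and then `1`
is subtracted. -/
def goodstein (m : ℕ) : ℕ → ℕ
  | 0 => m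
  | (n + 1) => hereditaryShift (n + 2) (n + 3) (goodstein m n) - 1


noncomputable def toOmega (b : ℕ) : ℕ → Ordinal.{0}
  | 0 => 0
  | (n + 1) =>
      ω ^ (toOmega b (Nat.log b (n + 1))) * ((n + 1) / b ^ Nat.log b (n + 1) : ℕ) +
        toOmega b ((n + 1) % b ^ Nat.log b (n + 1))
  termination_by n => n
  decreasing_by
  · exact Nat.log_lt_self b (Nat.succ_ne_zero n)
  · calc (n + 1) % b ^ Nat.log b (n + 1) < b ^ Nat.log b (n + 1) :=
        Nat.mod_lt _ (Nat.pos_of_ne_zero (by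
          intro h
          have hb : b = 0 := by
            rcases Nat.pow_eq_zero.mp h with ⟨hb, -⟩
            exact hb
          simp [hb, Nat.log_zero_left] at h))
      _ ≤ n + 1 := Nat.pow_log_le_self b (Nat.succ_ne_zero n)

lemma toOmega_zero (b : ℕ) : toOmega b 0 = 0 := by rw [toOmega]

lemma toOmega_of_ne_zero (b : ℕ) {n : ℕ} (hn : n ≠ 0) :
    toOmega b n = ω ^ (toOmega b (Nat.log b n)) * (n / b ^ Nat.log b n : ℕ) +
      toOmega b (n % b ^ Nat.log b n) := by
  cases n with
  | zero => exact absurd rfl hn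
  | succ k => rw [toOmega]

lemma hereditaryShift_of_ne_zero (b c : ℕ) {n : ℕ} (hn : n ≠ 0) :
    hereditaryShift b c n = c ^ (hereditaryShift b c (Nat.log b n)) * (n / b ^ Nat.log b n) +
      hereditaryShift b c (n % b ^ Nat.log b n) := by
  cases n with
  | zero => exact absurd rfl hn
  | succ k => rw [hereditaryShift]

lemma digit_facts {b : ℕ} (hb : 2 ≤ b) {n : ℕ} (hn : n ≠ 0) :
    1 ≤ n / b ^ Nat.log b n ∧ n / b ^ Nat.log b n < b ∧
    n % b ^ Nat.log b n < b ^ Nat.log b n := by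
  have hbpos : 0 < b := by omega
  have hpow : 0 < b ^ Nat.log b n := Nat.pow_pos hbpos
  refine ⟨(Nat.one_le_div_iff hpow).mpr (Nat.pow_log_le_self b hn), ?_, Nat.mod_lt _ hpow⟩
  have := Nat.lt_pow_succ_log_self hb n
  rw [pow_succ] at this
  exact Nat.div_lt_of_lt_mul this

lemma toOmega_key {b : ℕ} (hb : 2 ≤ b) :
    ∀ k : ℕ, (∀ m, m < k → toOmega b m < toOmega b k) ∧
      (∀ m, m < b ^ k → toOmega b m < ω ^ toOmega b k) := by
  intro k
  induction k using Nat.strong_induction_on with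
  | _ k IH =>
    have hb1 : 1 < b := hb
    have hbpos : 0 < b := by omega
    have part1 : ∀ m, m < k → toOmega b m < toOmega b k := by
      intro m hm
      have hk : k ≠ 0 := by omega
      obtain ⟨hd1, hdb, hrlt⟩ := digit_facts hb hk
      have hek : Nat.log b k < k := Nat.log_lt_self b hk
      have hrk : k % b ^ Nat.log b k < k :=
        lt_of_lt_of_le hrlt (Nat.pow_log_le_self b hk)
      have hkeq := toOmega_of_ne_zero b hk
      have hposE : (0:Ordinal) < ω ^ toOmega b (Nat.log b k) := opow_pos _ omega0_pos
      have hEd : ω ^ toOmega b (Nat.log b k) ≤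
          ω ^ toOmega b (Nat.log b k) * ((k / b ^ Nat.log b k : ℕ) : Ordinal) := by
        calc ω ^ toOmega b (Nat.log b k)
            = ω ^ toOmega b (Nat.log b k) * ((1:ℕ) : Ordinal) := by simp
          _ ≤ _ := mul_le_mul_right (by exact_mod_cast hd1) _
      rcases Nat.eq_zero_or_pos m with rfl | hm0
      · rw [toOmega_zero, hkeq]
        exact lt_of_lt_of_le (mul_pos hposE (by exact_mod_cast hd1)) le_self_add
      · have hm' : m ≠ 0 := by omega
        obtain ⟨hd1', hdb', hrlt'⟩ := digit_facts hb hm'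
        have hmeq := toOmega_of_ne_zero b hm'
        have hee : Nat.log b m ≤ Nat.log b k := Nat.log_mono_right hm.le
        rcases lt_or_eq_of_le hee with hlt | heq
        · -- log m < log k : m < b ^ log k, use part 2 of IH at log k
          have hmbe : m < b ^ Nat.log b k := by
            calc m < b ^ (Nat.log b m + 1) := Nat.lt_pow_succ_log_self hb1 m
            _ ≤ b ^ Nat.log b k := Nat.pow_le_pow_right hbpos hlt
          have := (IH _ hek).2 m hmbe
          rw [hkeq]
          exact lt_of_lt_of_le this (le_trans hEd le_self_add)
        · rw [heq] at hmeq hrlt' hd1' hdb'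
          have hdd : m / b ^ Nat.log b k ≤ k / b ^ Nat.log b k :=
            Nat.div_le_div_right hm.le
          have hr'E : toOmega b (m % b ^ Nat.log b k) < ω ^ toOmega b (Nat.log b k) :=
            (IH _ hek).2 _ hrlt'
          rcases lt_or_eq_of_le hdd with hddlt | hddeq
          · rw [hkeq, hmeq]
            calc ω ^ toOmega b (Nat.log b k) * ((m / b ^ Nat.log b k : ℕ) : Ordinal) +
                  toOmega b (m % b ^ Nat.log b k)
                < ω ^ toOmega b (Nat.log b k) * ((m / b ^ Nat.log b k : ℕ) : Ordinal) +
                  ω ^ toOmega b (Nat.log b k) := add_lt_add_right hr'E _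
              _ = ω ^ toOmega b (Nat.log b k) * (((m / b ^ Nat.log b k : ℕ) : Ordinal) + 1) := by
                  rw [mul_add, mul_one]
              _ ≤ ω ^ toOmega b (Nat.log b k) * ((k / b ^ Nat.log b k : ℕ) : Ordinal) := by
                  apply mul_le_mul_right
                  exact_mod_cast Nat.succ_le_of_lt hddlt
              _ ≤ _ := le_self_add
          · have hrr : m % b ^ Nat.log b k < k % b ^ Nat.log b k := by
              have h1 := Nat.div_add_mod m (b ^ Nat.log b k)
              have h2 := Nat.div_add_mod k (b ^ Nat.log b k)
              have h3 : b ^ Nat.log b k * (m / b ^ Nat.log b k)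
                  = b ^ Nat.log b k * (k / b ^ Nat.log b k) := by rw [hddeq]
              omega
            have hlast := (IH _ hrk).1 _ hrr
            rw [hkeq, hmeq, hddeq]
            exact add_lt_add_right hlast _
    refine ⟨part1, ?_⟩
    intro m hm
    rcases Nat.eq_zero_or_pos m with rfl | hm0
    · rw [toOmega_zero]; exact opow_pos _ omega0_pos
    · have hm' : m ≠ 0 := by omega
      obtain ⟨hd1', hdb', hrlt'⟩ := digit_facts hb hm'
      have hek : Nat.log b m < k := Nat.log_lt_of_lt_pow hm' hm
      have hmeq := toOmega_of_ne_zero b hm'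
      have hr'E : toOmega b (m % b ^ Nat.log b m) < ω ^ toOmega b (Nat.log b m) :=
        (IH _ hek).2 _ hrlt'
      have hE'k : toOmega b (Nat.log b m) < toOmega b k := part1 _ hek
      rw [hmeq]
      calc ω ^ toOmega b (Nat.log b m) * ((m / b ^ Nat.log b m : ℕ) : Ordinal) +
            toOmega b (m % b ^ Nat.log b m)
          < ω ^ toOmega b (Nat.log b m) * ((m / b ^ Nat.log b m : ℕ) : Ordinal) +
            ω ^ toOmega b (Nat.log b m) := add_lt_add_right hr'E _
        _ = ω ^ toOmega b (Nat.log b m) * (((m / b ^ Nat.log b m : ℕ) : Ordinal) + 1) := by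
            rw [mul_add, mul_one]
        _ ≤ ω ^ toOmega b (Nat.log b m) * ω := mul_le_mul_right
            (le_of_lt (by exact_mod_cast nat_lt_omega0 (m / b ^ Nat.log b m + 1))) _
        _ = ω ^ (toOmega b (Nat.log b m) + 1) := by rw [opow_add, opow_one]
        _ ≤ ω ^ toOmega b k := opow_le_opow_right omega0_pos (Order.add_one_le_iff.mpr hE'k)

lemma toOmega_strictMono {b : ℕ} (hb : 2 ≤ b) : StrictMono (toOmega b) :=
  fun _ k h => (toOmega_key hb k).1 _ h

lemma toOmega_decomp {c : ℕ} (hc : 2 ≤ c) (E d r : ℕ) (hd1 : 1 ≤ d) (hdc : d < c)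
    (hr : r < c ^ E) :
    toOmega c (c ^ E * d + r) = ω ^ toOmega c E * (d : ℕ) + toOmega c r := by
  have hpow : 0 < c ^ E := Nat.pow_pos (by omega)
  have hx : c ^ E * d + r ≠ 0 := by positivity
  have hlog : Nat.log c (c ^ E * d + r) = E := by
    apply Nat.log_eq_of_pow_le_of_lt_pow
    · calc c ^ E = c ^ E * 1 := by ring
      _ ≤ c ^ E * d := Nat.mul_le_mul_left _ hd1
      _ ≤ _ := Nat.le_add_right _ _
    · calc c ^ E * d + r < c ^ E * d + c ^ E := by omega
      _ = c ^ E * (d + 1) := by ring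
      _ ≤ c ^ E * c := Nat.mul_le_mul_left _ (by omega)
      _ = c ^ (E + 1) := by rw [pow_succ]
  have hdiv : (c ^ E * d + r) / c ^ E = d := by
    rw [Nat.mul_add_div hpow, Nat.div_eq_of_lt hr, add_zero]
  have hmod : (c ^ E * d + r) % c ^ E = r := by
    rw [Nat.mul_add_mod, Nat.mod_eq_of_lt hr]
  rw [toOmega_of_ne_zero c hx, hlog, hdiv, hmod]

lemma toOmega_pow {c : ℕ} (hc : 2 ≤ c) (E : ℕ) :
    toOmega c (c ^ E) = ω ^ toOmega c E := by
  have := toOmega_decomp hc E 1 0 le_rfl (by omega) (Nat.pow_pos (by omega))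
  simpa [toOmega_zero] using this

lemma toOmega_hereditaryShift {b c : ℕ} (hb : 2 ≤ b) (hbc : b ≤ c) :
    ∀ n, toOmega c (hereditaryShift b c n) = toOmega b n := by
  have hc : 2 ≤ c := le_trans hb hbc
  intro n
  induction n using Nat.strong_induction_on with
  | _ n IH =>
    rcases Nat.eq_zero_or_pos n with rfl | hn0
    · rw [show hereditaryShift b c 0 = 0 from by rw [hereditaryShift], toOmega_zero,
        toOmega_zero]
    · have hn : n ≠ 0 := by omega
      obtain ⟨hd1, hdb, hrlt⟩ := digit_facts hb hn
      have hek : Nat.log b n < n := Nat.log_lt_self b hn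
      have hrk : n % b ^ Nat.log b n < n :=
        lt_of_lt_of_le hrlt (Nat.pow_log_le_self b hn)
      have IHe := IH _ hek
      have IHr := IH _ hrk
      -- the shifted remainder is small
      have hsmall : hereditaryShift b c (n % b ^ Nat.log b n) <
          c ^ hereditaryShift b c (Nat.log b n) := by
        have h1 : toOmega c (hereditaryShift b c (n % b ^ Nat.log b n)) <
            toOmega c (c ^ hereditaryShift b c (Nat.log b n)) := by
          rw [IHr, toOmega_pow hc, IHe]
          exact (toOmega_key hb (Nat.log b n)).2 _ hrlt
        exact (toOmega_strictMono hc).lt_iff_lt.mp h1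
      rw [hereditaryShift_of_ne_zero b c hn,
        toOmega_decomp hc _ _ _ hd1 (lt_of_lt_of_le hdb hbc) hsmall,
        IHe, IHr, toOmega_of_ne_zero b hn]

lemma hereditaryShift_pos {b c : ℕ} (hb : 2 ≤ b) (hbc : b ≤ c) {n : ℕ} (hn : n ≠ 0) :
    0 < hereditaryShift b c n := by
  by_contra h
  have h0 : hereditaryShift b c n = 0 := by omega
  have h1 := toOmega_hereditaryShift hb hbc n
  rw [h0, toOmega_zero] at h1
  have h2 : toOmega b 0 < toOmega b n := toOmega_strictMono hb (Nat.pos_of_ne_zero hn)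
  rw [toOmega_zero, ← h1] at h2
  exact lt_irrefl _ h2

theorem goodstein_terminates (m : ℕ) : ∃ n, goodstein m n = 0 := by
  by_contra h
  push_neg at h
  set f : ℕ → Ordinal.{0} := fun n => toOmega (n + 2) (goodstein m n) with hf
  have hdec : ∀ n, f (n + 1) < f n := by
    intro n
    have hg : goodstein m n ≠ 0 := h n
    have hb : 2 ≤ n + 2 := by omega
    have hbc : n + 2 ≤ n + 3 := by omega
    have hpos : 0 < hereditaryShift (n + 2) (n + 3) (goodstein m n) :=
      hereditaryShift_pos hb hbc hg
    have h1 : goodstein m (n + 1) = hereditaryShift (n + 2) (n + 3) (goodstein m n) - 1 := by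
      rw [goodstein]
    have h2 : goodstein m (n + 1) < hereditaryShift (n + 2) (n + 3) (goodstein m n) := by
      omega
    calc f (n + 1) = toOmega (n + 3) (goodstein m (n + 1)) := rfl
      _ < toOmega (n + 3) (hereditaryShift (n + 2) (n + 3) (goodstein m n)) :=
          toOmega_strictMono (by omega) h2
      _ = toOmega (n + 2) (goodstein m n) := toOmega_hereditaryShift hb hbc _
      _ = f n := rfl
  obtain ⟨_, ⟨n, rfl⟩, hmin⟩ := Ordinal.lt_wf.has_min (Set.range f) ⟨f 0, ⟨0, rfl⟩⟩
  exact hmin (f (n + 1)) ⟨n + 1, rfl⟩ (hdec n)
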